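/- Let Γ_o = {γ ∈ PSL(2,ℤ) : d(2i, γ(2i)) ≤ diam(F_o) + 2 r0} where cosh(diam(F_o)) ≤ 23√3/24 and cosh(r0) = 5√3/6. Then |Γ_o| ≤ Area(D(2i, R))/Area(F_o) ≤ 252, where R = diam(F_o) + 3 r0, Area(D(2i,R)) = 2π(cosh R - 1) = (π/36)(848 + 11√4381), and Area(F_o) = π/3 - 1/2. -/

import Mathlib

open UpperHalfPlane Real MatrixGroups

noncomputable def arco (u : ℝ) : ℝ := Real.log (u + Real.sqrt (u^2 - 1))

lemma arco_nonneg {u : ℝ} (hu : 1 ≤ u) : 0 ≤ arco u :=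
  Real.log_nonneg (by have := Real.sqrt_nonneg (u^2-1); unfold arco at *; linarith)

lemma cosh_arco {u : ℝ} (hu : 1 ≤ u) : Real.cosh (arco u) = u := by
  have h0 : (0:ℝ) ≤ u^2 - 1 := by nlinarith
  have hs := Real.sq_sqrt h0
  have hsn := Real.sqrt_nonneg (u^2-1)
  have hy : (0:ℝ) < u + Real.sqrt (u^2-1) := by linarith
  rw [arco, Real.cosh_eq, Real.exp_log hy, Real.exp_neg, Real.exp_log hy]
  field_simp
  nlinarith [hs]

lemma sinh_arco {u : ℝ} (hu : 1 ≤ u) : Real.sinh (arco u) = Real.sqrt (u^2 - 1) := by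
  have h0 : (0:ℝ) ≤ u^2 - 1 := by nlinarith
  have hs := Real.sq_sqrt h0
  have hsn := Real.sqrt_nonneg (u^2-1)
  have hy : (0:ℝ) < u + Real.sqrt (u^2-1) := by linarith
  rw [arco, Real.sinh_eq, Real.exp_log hy, Real.exp_neg, Real.exp_log hy]
  field_simp
  nlinarith [hs]

lemma cosh_bound_11 : Real.cosh (arco 1.7 + 2 * arco 1.45) ≤ 11 := by
  have s1 : Real.sqrt ((1.7:ℝ)^2 - 1) ≤ 1.375 := by
    calc Real.sqrt ((1.7:ℝ)^2-1) ≤ Real.sqrt ((1.375:ℝ)^2) := Real.sqrt_le_sqrt (by norm_num)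
    _ = 1.375 := Real.sqrt_sq (by norm_num)
  have s2 : Real.sqrt ((1.45:ℝ)^2 - 1) ≤ 1.05 := by
    calc Real.sqrt ((1.45:ℝ)^2-1) ≤ Real.sqrt ((1.05:ℝ)^2) := Real.sqrt_le_sqrt (by norm_num)
    _ = 1.05 := Real.sqrt_sq (by norm_num)
  have n1 := Real.sqrt_nonneg ((1.7:ℝ)^2 - 1)
  have n2 := Real.sqrt_nonneg ((1.45:ℝ)^2 - 1)
  rw [Real.cosh_add, Real.cosh_two_mul, Real.sinh_two_mul,
    cosh_arco (by norm_num), cosh_arco (by norm_num),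
    sinh_arco (by norm_num), sinh_arco (by norm_num)]
  nlinarith [s1, s2, n1, n2]

lemma cosh_smul (γ : Matrix.SpecialLinearGroup (Fin 2) ℤ) (twoI : ℍ) (h : (twoI : ℂ) = ⟨0, 2⟩) :
    Real.cosh (dist twoI (γ • twoI)) =
      1 + ((4*(γ 1 0 : ℝ) + (γ 0 1 : ℝ))^2 + 4*((γ 0 0 : ℝ) - (γ 1 1 : ℝ))^2)/8 := by
  set a : ℝ := (γ 0 0 : ℝ) with ha
  set b : ℝ := (γ 0 1 : ℝ) with hb
  set c : ℝ := (γ 1 0 : ℝ) with hc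
  set d : ℝ := (γ 1 1 : ℝ) with hd
  have hdet : a * d - b * c = 1 := by
    have := γ.prop
    rw [Matrix.det_fin_two] at this
    rw [ha, hb, hc, hd]
    exact_mod_cast this
  have hz : (twoI : ℂ) = 2 * Complex.I := by
    rw [h]; apply Complex.ext <;> simp
  have hw : ((γ • twoI : ℍ) : ℂ) = ((a : ℂ) * (twoI:ℂ) + (b:ℂ)) /
      ((c:ℂ) * (twoI:ℂ) + (d:ℂ)) := by
    rw [UpperHalfPlane.specialLinearGroup_apply]
    simp [eq_intCast, ha, hb, hc, hd]
  have hden : ((c:ℂ) * (twoI:ℂ) + (d:ℂ)) ≠ 0 := by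
    rw [hz]
    intro h0
    have h1 : ((c:ℂ) * (2*Complex.I) + (d:ℂ)).im = 0 := by rw [h0]; simp
    have h2 : ((c:ℂ) * (2*Complex.I) + (d:ℂ)).re = 0 := by rw [h0]; simp
    simp [Complex.add_im, Complex.mul_im, Complex.add_re, Complex.mul_re] at h1 h2
    rw [h1, h2] at hdet
    norm_num at hdet
  have hnq : Complex.normSq ((c:ℂ) * (twoI:ℂ) + (d:ℂ)) = d^2 + 4*c^2 := by
    rw [hz]; simp [Complex.normSq_apply]; ring
  have hnq0 : d^2 + 4*c^2 ≠ 0 := by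
    rw [← hnq]; simpa using (Complex.normSq_pos.mpr hden).ne'
  have hwim : (γ • twoI).im = 2 / (d^2 + 4*c^2) := by
    rw [← UpperHalfPlane.coe_im, hw, Complex.div_im, hnq, hz]
    simp [Complex.add_im, Complex.mul_im, Complex.add_re, Complex.mul_re]
    field_simp
    ring_nf
    nlinarith [hdet]
  have him2 : twoI.im = 2 := by rw [← UpperHalfPlane.coe_im, h]
  have hsub : (twoI:ℂ) - ((γ • twoI : ℍ) : ℂ) =
      ((-4*c-b : ℝ) + (2*d-2*a : ℝ) * Complex.I) / ((c:ℂ) * (twoI:ℂ) + (d:ℂ)) := by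
    rw [hw, eq_div_iff hden, sub_mul, div_mul_cancel₀ _ hden, hz]
    apply Complex.ext <;> simp <;> ring
  have hdist2 : dist (twoI:ℂ) ((γ • twoI : ℍ) : ℂ)^2 =
      ((4*c+b)^2 + 4*(a-d)^2) / (d^2 + 4*c^2) := by
    rw [Complex.dist_eq, Complex.sq_norm, hsub, Complex.normSq_div, hnq,
      Complex.normSq_add_mul_I]
    ring
  rw [UpperHalfPlane.cosh_dist, hdist2, hwim, him2]
  have h2 : (0:ℝ) < d^2+4*c^2 := lt_of_le_of_ne (by positivity) (Ne.symm hnq0)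
  field_simp
  ring

noncomputable def Fbox : Finset (ℤ×ℤ×ℤ×ℤ) :=
  ((Finset.Icc (-2:ℤ) 2 ×ˢ Finset.Icc (-8:ℤ) 8 ×ˢ Finset.Icc (-4:ℤ) 4 ×ˢ Finset.Icc (-5:ℤ) 5).filter
    (fun x => (x.2.2.2 + x.2.2.1)*x.2.2.2 - (x.2.1 - 4*x.1)*x.1 = 1 ∧ x.2.1^2 + 4*x.2.2.1^2 ≤ 80))

set_option maxRecDepth 100000 in
lemma count252 : Fbox.card ≤ 252 := by decide

lemma intBounds (a b c d : ℤ) (hdet : a*d - b*c = 1)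
    (hQ : (4*c+b)^2 + 4*(a-d)^2 ≤ 80) :
    (-2 ≤ c ∧ c ≤ 2) ∧ (-8 ≤ 4*c+b ∧ 4*c+b ≤ 8) ∧ (-4 ≤ a-d ∧ a-d ≤ 4)
      ∧ (-5 ≤ d ∧ d ≤ 5) := by
  have hs : (4*c+b)^2 ≤ 80 := by nlinarith [sq_nonneg (a-d)]
  have ht : (a-d)^2 ≤ 20 := by nlinarith [sq_nonneg (4*c+b)]
  have hc7 : 12*c^2 ≤ 92 := by
    nlinarith [sq_nonneg (a+d), sq_nonneg (b-2*c), hdet, hQ, sq_nonneg (a-d)]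
  have h44 : (a+d)^2 ≤ 44 := by
    nlinarith [sq_nonneg b, hdet, hQ, sq_nonneg (a-d), sq_nonneg c]
  have hd32 : 4*d^2 ≤ 128 := by nlinarith [h44, ht, sq_nonneg (a+d-(a-d))]
  refine ⟨⟨?_, ?_⟩, ⟨?_, ?_⟩, ⟨?_, ?_⟩, ?_, ?_⟩ <;>
    (by_contra h; push_neg at h; nlinarith [hs, ht, hc7, hd32, h])

/-- The set `Γ_o = {γ ∈ PSL(2,ℤ) : d(2i, γ 2i) ≤ diam F_o + 2 r0}` (elements of the
modular group regarded as transformations of `ℍ`, which identifies `±γ`) has at most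
`252` elements, where `F_o = {z : |z| ≥ 1, |Re z| ≤ 1/2, Im z < 2}` and
`r0 = sup_{z ∈ F_o} d(2i, z)`. -/
theorem stmt_18
    (Fo : Set ℍ) (hFo : Fo = {z : ℍ | 1 ≤ ‖(z : ℂ)‖ ∧ |z.re| ≤ 1 / 2 ∧ z.im < 2})
    (twoI : ℍ) (htwoI : (twoI : ℂ) = ⟨0, 2⟩)
    (r0 : ℝ) (hr0 : r0 = sSup ((dist twoI ·) '' Fo)) :
    {f : ℍ → ℍ | ∃ γ : Matrix.SpecialLinearGroup (Fin 2) ℤ,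
        f = (fun z => γ • z) ∧ dist twoI (γ • twoI) ≤ Metric.diam Fo + 2 * r0}.ncard
      ≤ 252 := by
  classical
  have hmem : ∀ z : ℍ, z ∈ Fo → |z.re| ≤ 1/2 ∧ (0.866:ℝ) ≤ z.im ∧ z.im ≤ 2 := by
    intro z hz
    rw [hFo] at hz
    obtain ⟨h1, h2, h3⟩ := hz
    have hre2 : z.re^2 ≤ 1/4 := by
      obtain ⟨hl, hr⟩ := abs_le.mp h2; nlinarith
    have habs : 1 ≤ (z:ℂ).re^2 + (z:ℂ).im^2 := by
      have e1 : ‖(z:ℂ)‖^2 = (z:ℂ).re^2 + (z:ℂ).im^2 := by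
        rw [Complex.sq_norm, Complex.normSq_apply]; ring
      nlinarith [h1, norm_nonneg (z:ℂ)]
    rw [UpperHalfPlane.coe_re, UpperHalfPlane.coe_im] at habs
    have him4 : 3 ≤ 4*z.im^2 := by nlinarith
    exact ⟨h2, by nlinarith [z.im_pos], le_of_lt h3⟩
  have htwoIim : twoI.im = 2 := by rw [← UpperHalfPlane.coe_im, htwoI]
  have htwoIre : twoI.re = 0 := by rw [← UpperHalfPlane.coe_re, htwoI]
  -- diameter bound
  have hdiam : Metric.diam Fo ≤ arco 1.7 := by
    apply Metric.diam_le_of_forall_dist_le (arco_nonneg (by norm_num))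
    intro z hz w hw
    obtain ⟨hz1, hz2, hz3⟩ := hmem z hz
    obtain ⟨hw1, hw2, hw3⟩ := hmem w hw
    have hzp : (0:ℝ) < z.im := by linarith
    have hwp : (0:ℝ) < w.im := by linarith
    have hpos : (0:ℝ) < 2 * z.im * w.im := by positivity
    have hcosh : Real.cosh (dist z w) ≤ 1.7 := by
      rw [UpperHalfPlane.cosh_dist]
      have hd2 : dist (z:ℂ) (w:ℂ)^2 = (z.re - w.re)^2 + (z.im - w.im)^2 := by
        rw [Complex.dist_eq_re_im, Real.sq_sqrt (by positivity),
          UpperHalfPlane.coe_re, UpperHalfPlane.coe_re,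
          UpperHalfPlane.coe_im, UpperHalfPlane.coe_im]
      obtain ⟨ha1, hb1⟩ := abs_le.mp hz1
      obtain ⟨ha2, hb2⟩ := abs_le.mp hw1
      have key : (z.re - w.re)^2 + (z.im - w.im)^2 ≤ 0.7*(2*z.im*w.im) := by
        nlinarith [mul_nonneg (by linarith : (0:ℝ) ≤ 1 - (z.re-w.re)) (by linarith : (0:ℝ) ≤ 1 + (z.re-w.re)),
          mul_nonneg (by linarith : (0:ℝ) ≤ z.im - 0.866) (by linarith : (0:ℝ) ≤ 2 - w.im),
          mul_nonneg (by linarith : (0:ℝ) ≤ w.im - 0.866) (by linarith : (0:ℝ) ≤ 2 - z.im),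
          mul_nonneg (by linarith : (0:ℝ) ≤ z.im - 0.866) (by linarith : (0:ℝ) ≤ w.im - 0.866),
          mul_nonneg (by linarith : (0:ℝ) ≤ 2 - z.im) (by linarith : (0:ℝ) ≤ 2 - w.im),
          sq_nonneg (z.im - w.im)]
      rw [hd2]
      calc 1 + ((z.re-w.re)^2+(z.im-w.im)^2)/(2*z.im*w.im)
          ≤ 1 + (0.7*(2*z.im*w.im))/(2*z.im*w.im) := by gcongr
        _ = 1.7 := by rw [mul_div_assoc, div_self (ne_of_gt hpos)]; norm_num
    have h3 : |dist z w| ≤ |arco 1.7| :=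
      Real.cosh_le_cosh.mp (by rw [cosh_arco (by norm_num : (1:ℝ) ≤ 1.7)]; exact hcosh)
    rwa [abs_of_nonneg dist_nonneg, abs_of_nonneg (arco_nonneg (by norm_num))] at h3
  -- r0 bound
  have hr0b : r0 ≤ arco 1.45 := by
    rw [hr0]
    apply Real.sSup_le _ (arco_nonneg (by norm_num))
    rintro x ⟨z, hz, rfl⟩
    obtain ⟨hz1, hz2, hz3⟩ := hmem z hz
    have hzp : (0:ℝ) < z.im := by linarith
    have hpos : (0:ℝ) < 2 * twoI.im * z.im := by rw [htwoIim]; positivity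
    show dist twoI z ≤ arco 1.45
    have hcosh : Real.cosh (dist twoI z) ≤ 1.45 := by
      rw [UpperHalfPlane.cosh_dist]
      have hd2 : dist (twoI:ℂ) (z:ℂ)^2 = z.re^2 + (2 - z.im)^2 := by
        rw [Complex.dist_eq_re_im, Real.sq_sqrt (by positivity),
          UpperHalfPlane.coe_re, UpperHalfPlane.coe_re,
          UpperHalfPlane.coe_im, UpperHalfPlane.coe_im, htwoIim, htwoIre]
        ring
      obtain ⟨ha1, hb1⟩ := abs_le.mp hz1
      have key : z.re^2 + (2 - z.im)^2 ≤ 0.45*(2*2*z.im) := by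
        nlinarith [mul_nonneg (by linarith : (0:ℝ) ≤ 1/2 - z.re) (by linarith : (0:ℝ) ≤ 1/2 + z.re),
          mul_nonneg (by linarith : (0:ℝ) ≤ z.im - 0.866) (by linarith : (0:ℝ) ≤ 2 - z.im)]
      rw [hd2, htwoIim]
      calc 1 + (z.re^2+(2-z.im)^2)/(2*2*z.im)
          ≤ 1 + (0.45*(2*2*z.im))/(2*2*z.im) := by gcongr
        _ = 1.45 := by rw [mul_div_assoc, div_self (by positivity : (2*2*z.im : ℝ) ≠ 0)]; norm_num
    have h3 : |dist twoI z| ≤ |arco 1.45| :=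
      Real.cosh_le_cosh.mp (by rw [cosh_arco (by norm_num : (1:ℝ) ≤ 1.45)]; exact hcosh)
    rwa [abs_of_nonneg dist_nonneg, abs_of_nonneg (arco_nonneg (by norm_num))] at h3
  -- the integer bound
  have hQb : ∀ γ : Matrix.SpecialLinearGroup (Fin 2) ℤ,
      dist twoI (γ • twoI) ≤ Metric.diam Fo + 2*r0 →
      (4*(γ 1 0) + γ 0 1)^2 + 4*(γ 0 0 - γ 1 1)^2 ≤ (80:ℤ) := by
    intro γ hd
    have hRn : (0:ℝ) ≤ arco 1.7 + 2*arco 1.45 := by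
      have h1 := arco_nonneg (by norm_num : (1:ℝ) ≤ 1.7)
      have h2 := arco_nonneg (by norm_num : (1:ℝ) ≤ 1.45)
      linarith
    have hco : Real.cosh (dist twoI (γ • twoI)) ≤ 11 := by
      refine le_trans (Real.cosh_le_cosh.mpr ?_) cosh_bound_11
      rw [abs_of_nonneg dist_nonneg, abs_of_nonneg hRn]
      linarith
    rw [cosh_smul γ twoI htwoI] at hco
    have hreal : (4*((γ 1 0 : ℤ):ℝ) + ((γ 0 1 : ℤ):ℝ))^2
        + 4*(((γ 0 0 : ℤ):ℝ) - ((γ 1 1 : ℤ):ℝ))^2 ≤ 80 := by linarith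
    exact_mod_cast hreal
  -- counting
  set T : Set (Matrix.SpecialLinearGroup (Fin 2) ℤ) :=
    {γ | (4*(γ 1 0) + γ 0 1)^2 + 4*(γ 0 0 - γ 1 1)^2 ≤ (80:ℤ)} with hT
  set e : Matrix.SpecialLinearGroup (Fin 2) ℤ → ℤ×ℤ×ℤ×ℤ :=
    fun γ => (γ 1 0, 4*(γ 1 0) + γ 0 1, γ 0 0 - γ 1 1, γ 1 1) with he_def
  have he : Function.Injective e := by
    intro γ η h
    simp only [he_def, Prod.mk.injEq] at h
    obtain ⟨h1, h2, h3, h4⟩ := h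
    have e10 : γ 1 0 = η 1 0 := by omega
    have e01 : γ 0 1 = η 0 1 := by omega
    have e00 : γ 0 0 = η 0 0 := by omega
    have e11 : γ 1 1 = η 1 1 := by omega
    ext i j
    fin_cases i <;> fin_cases j <;> assumption
  have heT : e '' T ⊆ ↑Fbox := by
    rintro _ ⟨γ, hγ, rfl⟩
    have hdet : γ 0 0 * γ 1 1 - γ 0 1 * γ 1 0 = 1 := by
      have := γ.prop; rw [Matrix.det_fin_two] at this; exact this
    have hQ : (4*(γ 1 0) + γ 0 1)^2 + 4*(γ 0 0 - γ 1 1)^2 ≤ (80:ℤ) := hγ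
    obtain ⟨⟨hb1, hb2⟩, ⟨hb3, hb4⟩, ⟨hb5, hb6⟩, hb7, hb8⟩ :=
      intBounds (γ 0 0) (γ 0 1) (γ 1 0) (γ 1 1) hdet hQ
    simp only [Fbox, Finset.coe_filter, Set.mem_setOf_eq, Finset.mem_product,
      Finset.mem_Icc]
    refine ⟨⟨⟨hb1, hb2⟩, ⟨hb3, hb4⟩, ⟨hb5, hb6⟩, hb7, hb8⟩, by linear_combination hdet, hQ⟩
  have hsub : {f : ℍ → ℍ | ∃ γ : Matrix.SpecialLinearGroup (Fin 2) ℤ,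
        f = (fun z => γ • z) ∧ dist twoI (γ • twoI) ≤ Metric.diam Fo + 2 * r0} ⊆
      (fun γ : Matrix.SpecialLinearGroup (Fin 2) ℤ => (fun z : ℍ => γ • z)) '' T := by
    rintro f ⟨γ, rfl, hdist⟩
    exact ⟨γ, hQb γ hdist, rfl⟩
  have hETfin : (e '' T).Finite := Set.Finite.subset Fbox.finite_toSet heT
  have hTfin : T.Finite := Set.Finite.of_finite_image hETfin he.injOn
  calc {f : ℍ → ℍ | ∃ γ : Matrix.SpecialLinearGroup (Fin 2) ℤ,
        f = (fun z => γ • z) ∧ dist twoI (γ • twoI) ≤ Metric.diam Fo + 2 * r0}.ncard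
      ≤ ((fun γ : Matrix.SpecialLinearGroup (Fin 2) ℤ => (fun z : ℍ => γ • z)) '' T).ncard :=
        Set.ncard_le_ncard hsub (hTfin.image _)
    _ ≤ T.ncard := Set.ncard_image_le hTfin
    _ = (e '' T).ncard := (Set.ncard_image_of_injective T he).symm
    _ ≤ (↑Fbox : Set (ℤ×ℤ×ℤ×ℤ)).ncard := Set.ncard_le_ncard heT Fbox.finite_toSet
    _ = Fbox.card := Set.ncard_coe_finset Fbox
    _ ≤ 252 := count252
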